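/- Let ℓ ≥ 0 be an integer, let n₀, n₁, …, n_{ℓ+1} be positive integers, and for each i = 1, …, ℓ+1 let W_i be a real n_i × n_{i−1} matrix. Let C ⊆ ℝ^{n₀} be a nonempty compact set. Then there exist vectors b_i ∈ ℝ^{n_i} for i = 1, …, ℓ+1 such that, defining the layers L_i : ℝ^{n_{i−1}} → ℝ^{n_i} by L_i(x) := σ(W_i x + b_i), where σ(t) = max(t, 0) is the ReLU function applied entrywise, one has W_{ℓ+1} (L_ℓ ∘ ⋯ ∘ L_1)(c) + b_{ℓ+1} = W_{ℓ+1} W_ℓ ⋯ W_1 c for every c ∈ C. In other words, a purely linear network (no activations and no biases) can be exactly realized on any compact set by a ReLU network with the same weight matrices and suitably chosen biases. -/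

import Mathlib

/-- The forward pass through `i` ReLU layers: `reluLayers n W b i c = (L_i ∘ ⋯ ∘ L_1)(c)`,
where `L_k(x) = σ(W_k x + b_k)` and `σ(t) = max(t,0)` acts entrywise. -/
def reluLayers (n : ℕ → ℕ) (W : ∀ i : ℕ, Matrix (Fin (n (i + 1))) (Fin (n i)) ℝ)
    (b : ∀ i : ℕ, Fin (n (i + 1)) → ℝ) : ∀ i : ℕ, (Fin (n 0) → ℝ) → (Fin (n i) → ℝ)
  | 0 => fun c => c
  | i + 1 => fun c j => max ((W i).mulVec (reluLayers n W b i c) j + b i j) 0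

/-- The purely linear forward pass: `linLayers n W i c = W_i ⋯ W_1 c` (no activations,
no biases). -/
def linLayers (n : ℕ → ℕ) (W : ∀ i : ℕ, Matrix (Fin (n (i + 1))) (Fin (n i)) ℝ) :
    ∀ i : ℕ, (Fin (n 0) → ℝ) → (Fin (n i) → ℝ)
  | 0 => fun c => c
  | i + 1 => fun c => (W i).mulVec (linLayers n W i c)

/-- a purely linear network (no activations, no biases) can be realized
exactly on any nonempty compact set by a ReLU network with the same weight matrices and
suitably chosen biases: there exist biases `b_1, …, b_{ℓ+1}` such that
`W_{ℓ+1} (L_ℓ ∘ ⋯ ∘ L_1)(c) + b_{ℓ+1} = W_{ℓ+1} W_ℓ ⋯ W_1 c` for all `c ∈ C`. -/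
theorem relu_network_realizes_linear_on_compact (ℓ : ℕ) (n : ℕ → ℕ)
    (hn : ∀ i, 0 < n i) (W : ∀ i : ℕ, Matrix (Fin (n (i + 1))) (Fin (n i)) ℝ)
    (C : Set (Fin (n 0) → ℝ)) (hC : C.Nonempty) (hCcpt : IsCompact C) :
    ∃ b : ∀ i : ℕ, Fin (n (i + 1)) → ℝ, ∀ c ∈ C,
      (W ℓ).mulVec (reluLayers n W b ℓ c) + b ℓ = linLayers n W (ℓ + 1) c := by
  classical
  -- continuity of the linear layers
  have hcont : ∀ i, Continuous (linLayers n W i) := by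
    intro i
    induction i with
    | zero => exact continuous_id
    | succ k ih =>
        have : Continuous ((W k).mulVecLin) := (W k).mulVecLin.continuous_of_finiteDimensional
        simpa [linLayers, Matrix.mulVecLin_apply, Function.comp_def] using this.comp ih
  -- for each i there is a shift t making everything nonnegative on C
  have hbdd : ∀ i, ∃ t : Fin (n i) → ℝ, ∀ c ∈ C, ∀ j, 0 ≤ linLayers n W i c j + t j := by
    intro i
    refine ⟨fun j => - sInf ((fun c => linLayers n W i c j) '' C), ?_⟩
    intro c hc j
    have hcomp : IsCompact ((fun c => linLayers n W i c j) '' C) :=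
      hCcpt.image ((continuous_apply j).comp (hcont i))
    have hle : sInf ((fun c => linLayers n W i c j) '' C) ≤ linLayers n W i c j :=
      csInf_le hcomp.bddBelow ⟨c, hc, rfl⟩
    have : 0 ≤ linLayers n W i c j + -sInf ((fun c => linLayers n W i c j) '' C) := by linarith
    simpa using this
  -- the shifts : t 0 = 0, t (i+1) chosen large enough
  set t : ∀ i, Fin (n i) → ℝ := fun i =>
    match i with
    | 0 => 0
    | k + 1 => Classical.choose (hbdd (k + 1)) with ht
  have ht0 : t 0 = 0 := rfl
  have htpos : ∀ k, ∀ c ∈ C, ∀ j, 0 ≤ linLayers n W (k + 1) c j + t (k + 1) j := by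
    intro k
    exact Classical.choose_spec (hbdd (k + 1))
  -- the biases
  refine ⟨fun i j => (if i < ℓ then t (i + 1) j else 0) - (W i).mulVec (t i) j, ?_⟩
  set b : ∀ i : ℕ, Fin (n (i + 1)) → ℝ :=
    fun i j => (if i < ℓ then t (i + 1) j else 0) - (W i).mulVec (t i) j with hb
  -- key invariant
  have key : ∀ i, i ≤ ℓ → ∀ c ∈ C,
      reluLayers n W b i c = fun j => linLayers n W i c j + t i j := by
    intro i
    induction i with
    | zero =>
        intro _ c hc
        funext j
        simp [reluLayers, linLayers, ht0]
    | succ k ih =>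
        intro hkl c hc
        have hk : k < ℓ := hkl
        funext j
        have hrw := ih (le_of_lt hk) c hc
        have hWadd : (W k).mulVec (fun j => linLayers n W k c j + t k j) j
            = (W k).mulVec (linLayers n W k c) j + (W k).mulVec (t k) j := by
          have : (fun j => linLayers n W k c j + t k j) = linLayers n W k c + t k := rfl
          rw [this, Matrix.mulVec_add, Pi.add_apply]
        have hnn := htpos k c hc j
        simp only [reluLayers, hrw, hWadd]
        simp only [hb, if_pos hk]
        have : (W k).mulVec (linLayers n W k c) j + (W k).mulVec (t k) j +
            (t (k + 1) j - (W k).mulVec (t k) j)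
            = linLayers n W (k + 1) c j + t (k + 1) j := by
          simp only [linLayers]; ring
        rw [this]
        exact max_eq_left hnn
  intro c hc
  funext j
  have hrw := key ℓ le_rfl c hc
  have hWadd : (W ℓ).mulVec (fun j => linLayers n W ℓ c j + t ℓ j) j
      = (W ℓ).mulVec (linLayers n W ℓ c) j + (W ℓ).mulVec (t ℓ) j := by
    have : (fun j => linLayers n W ℓ c j + t ℓ j) = linLayers n W ℓ c + t ℓ := rfl
    rw [this, Matrix.mulVec_add, Pi.add_apply]
  simp only [Pi.add_apply, hrw, hWadd]
  simp only [hb, if_neg (lt_irrefl ℓ), linLayers]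
  ring
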